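/- Let κ be an infinite cardinal, δ < κ⁺ a limit ordinal, and t : δ → ω an 𝕊_κ-limit, i.e., t↾(α+1) ∈ 𝕊_κ for all α < δ. Then t has an extension s ∈ 𝕊_κ with domain δ+1 if and only if liminf(t) is some finite n < ω and there exists α < δ such that the order type of {ξ ∈ (α, δ) : t(ξ) = n} is less than κ·ω. In particular, if cf(δ) > ω then such an extension always exists. -/

import Mathlib

open Cardinal

universe u

/-- The order type of a set of ordinals (one universe up). -/
noncomputable def otp (s : Set Ordinal.{u}) : Ordinal.{u + 1} :=
  @Ordinal.type s (Subrel ((· < ·) : Ordinal.{u} → Ordinal.{u} → Prop) (· ∈ s)) inferInstance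

/-- `C` is unbounded in (cofinal below) `x`. -/
def UnbddBelow (C : Set Ordinal.{u}) (x : Ordinal.{u}) : Prop :=
  ∀ β < x, ∃ α ∈ C, β < α ∧ α < x

/-- The set `Cₙᵗ = {α < l : t α ≤ n}`. -/
def Ct (t : Ordinal.{u} → ℕ) (l : Ordinal.{u}) (n : ℕ) : Set Ordinal.{u} :=
  {α | α < l ∧ t α ≤ n}

lemma otp_mono {A B : Set Ordinal.{u}} (h : A ⊆ B) : otp A ≤ otp B :=
  Ordinal.type_le_iff'.2 ⟨RelEmbedding.ofMonotone (fun a => ⟨a.1, h a.2⟩) (fun _ _ hab => hab)⟩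

lemma otp_singleton_le (a : Ordinal.{u}) : otp {a} ≤ 1 :=
  le_of_eq (Ordinal.type_eq_one_iff_unique.2 ⟨Set.uniqueSingleton a⟩)

lemma otp_union_le {A B : Set Ordinal.{u}} (h : ∀ a ∈ A, ∀ b ∈ B, a < b) :
    otp (A ∪ B) ≤ otp A + otp B := by
  classical
  unfold otp
  rw [← Ordinal.type_sum_lex]
  refine Ordinal.type_le_iff'.2 ⟨RelEmbedding.ofMonotone
    (fun x => if hx : x.1 ∈ A then Sum.inl ⟨x.1, hx⟩ else Sum.inr ⟨x.1, x.2.resolve_left hx⟩) ?_⟩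
  intro x y hxy
  have hxy' : (x : Ordinal) < y := hxy
  by_cases hx : x.1 ∈ A <;> by_cases hy : y.1 ∈ A
  · simp only [dif_pos hx, dif_pos hy]; exact Sum.Lex.inl hxy'
  · simp only [dif_pos hx, dif_neg hy]; exact Sum.Lex.sep _ _
  · exact absurd hxy' (asymm (h _ hy _ (x.2.resolve_left hx)))
  · simp only [dif_neg hx, dif_neg hy]; exact Sum.Lex.inr hxy'

lemma otp_Iio (o : Ordinal.{u}) : otp (Set.Iio o) = Ordinal.lift.{u+1} o := by
  letI : IsWellOrder o.ToType ((· < ·) : o.ToType → o.ToType → Prop) := isWellOrder_lt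
  have f : @RelIso ↥(Set.Iio o) o.ToType
      (Subrel ((· < ·) : Ordinal.{u} → Ordinal.{u} → Prop) (· ∈ Set.Iio o))
      ((· < ·) : o.ToType → o.ToType → Prop) :=
    { toEquiv := (Ordinal.ToType.mk (o := o)).toEquiv,
      map_rel_iff' := fun {a b} => (Ordinal.ToType.mk (o := o)).lt_iff_lt }
  have h := f.ordinal_lift_type_eq
  rw [Ordinal.type_toType] at h
  unfold otp
  rw [← h, Ordinal.lift_id'.{u, u+1}]

lemma ord_lt_add_one_iff {a b : Ordinal.{u}} : a < b + 1 ↔ a ≤ b := by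
  rw [Ordinal.add_one_eq_succ, Order.lt_succ_iff]

lemma one_lt_L {κ : Cardinal.{u}} (hκ : ℵ₀ ≤ κ) :
    1 < Ordinal.lift.{u+1} (κ.ord * Ordinal.omega0) := by
  have h0 : (0 : Ordinal.{u}) < κ.ord := by
    refine lt_of_lt_of_le Ordinal.omega0_pos ?_
    rw [← Cardinal.ord_aleph0]
    exact Cardinal.ord_le_ord.2 hκ
  have h1 : (1 : Ordinal.{u}) < κ.ord * Ordinal.omega0 :=
    lt_of_lt_of_le Ordinal.one_lt_omega0 (Ordinal.le_mul_right _ h0)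
  simpa using Ordinal.lift_lt.2 h1

lemma add_lt_L {κ : Cardinal.{u}} (hκ : ℵ₀ ≤ κ) {a b : Ordinal.{u+1}}
    (ha : a < Ordinal.lift.{u+1} (κ.ord * Ordinal.omega0))
    (hb : b < Ordinal.lift.{u+1} (κ.ord * Ordinal.omega0)) :
    a + b < Ordinal.lift.{u+1} (κ.ord * Ordinal.omega0) := by
  rw [Ordinal.lift_mul, Ordinal.lift_omega0] at ha hb ⊢
  obtain ⟨d, hd, had⟩ := (Ordinal.lt_mul_iff_of_isSuccLimit Ordinal.isSuccLimit_omega0).1 ha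
  obtain ⟨e, he, hbe⟩ := (Ordinal.lt_mul_iff_of_isSuccLimit Ordinal.isSuccLimit_omega0).1 hb
  obtain ⟨p, rfl⟩ := Ordinal.lt_omega0.1 hd
  obtain ⟨q, rfl⟩ := Ordinal.lt_omega0.1 he
  have h1 : a + b < Ordinal.lift.{u+1} κ.ord * ((p + q : ℕ) : Ordinal) := by
    have := (add_lt_add_right hbe a).trans_le (add_le_add_left had.le _)
    rwa [← mul_add, ← Nat.cast_add] at this
  exact h1.trans_le (mul_le_mul_right (Ordinal.nat_lt_omega0 _).le _)

lemma unbdd_mono {A B : Set Ordinal.{u}} {x : Ordinal.{u}}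
    (h : ∀ ξ ∈ A, ξ < x → ξ ∈ B) (hA : UnbddBelow A x) : UnbddBelow B x := by
  intro β hβ
  obtain ⟨α, hαA, h1, h2⟩ := hA β hβ
  exact ⟨α, h α hαA h2, h1, h2⟩

lemma not_unbdd_bound {A : Set Ordinal.{u}} {x : Ordinal.{u}} (h : ¬ UnbddBelow A x) :
    ∃ β < x, ∀ ξ ∈ A, ξ < x → ξ ≤ β := by
  unfold UnbddBelow at h
  push_neg at h
  obtain ⟨β, hβ, h⟩ := h
  exact ⟨β, hβ, fun ξ hξ hlt => not_lt.1 fun hc => absurd hlt (not_lt.2 (h ξ hξ hc))⟩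

lemma bound_small_values {δ : Ordinal.{u}} (hδ0 : 0 < δ) {t : Ordinal.{u} → ℕ} (n : ℕ)
    (h : ∀ m < n, ¬ UnbddBelow {ξ | ξ < δ ∧ t ξ = m} δ) :
    ∃ β < δ, ∀ ξ < δ, t ξ < n → ξ ≤ β := by
  induction n with
  | zero => exact ⟨0, hδ0, fun ξ _ h' => absurd h' (Nat.not_lt_zero _)⟩
  | succ n ih =>
    obtain ⟨β₁, hβ₁, h1⟩ := ih (fun m hm => h m (hm.trans (Nat.lt_succ_self n)))
    obtain ⟨β₂, hβ₂, h2⟩ := not_unbdd_bound (h n (Nat.lt_succ_self n))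
    refine ⟨max β₁ β₂, max_lt hβ₁ hβ₂, fun ξ hξ hlt => ?_⟩
    rcases Nat.lt_succ_iff_lt_or_eq.1 hlt with h' | h'
    · exact (h1 ξ hξ h').trans (le_max_left _ _)
    · exact (h2 ξ ⟨hξ, h'⟩ hξ).trans (le_max_right _ _)

lemma lift_le_otp (o : Ordinal.{u}) (X : Set Ordinal.{u})
    (f : ∀ i : Ordinal.{u}, i < o → Ordinal.{u})
    (hmem : ∀ i hi, f i hi ∈ X) (hmono : ∀ i j hi hj, i < j → f i hi < f j hj) :
    Ordinal.lift.{u+1} o ≤ otp X := by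
  rw [← otp_Iio]
  exact Ordinal.type_le_iff'.2 ⟨RelEmbedding.ofMonotone (fun i => ⟨f i.1 i.2, hmem _ _⟩)
    (fun a b hab => hmono _ _ _ _ hab)⟩
/-- Membership in `𝕊_κ`: `t` has domain a successor ordinal `l < κ⁺`, each `Cₙᵗ` is
closed, at limit ordinals `t` takes the least value `n` with `Cₙᵗ` unbounded below, and
every interval disjoint from `Cₙ₋₁ᵗ` meets `Cₙᵗ` in a set of order type `< κ·ω`. -/
def InSkappa (κ : Cardinal.{u}) (l : Ordinal.{u}) (t : Ordinal.{u} → ℕ) : Prop :=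
  (∃ δ, l = δ + 1) ∧ l < (Order.succ κ).ord ∧
  (∀ n : ℕ, ∀ x < l, Order.IsSuccLimit x → UnbddBelow (Ct t l n) x → t x ≤ n) ∧
  (∀ x < l, Order.IsSuccLimit x →
    UnbddBelow (Ct t l (t x)) x ∧ ∀ m : ℕ, UnbddBelow (Ct t l m) x → t x ≤ m) ∧
  (∀ n : ℕ, ∀ I : Set Ordinal.{u}, I ⊆ Set.Iio l → I.OrdConnected →
    (∀ x ∈ I, n ≤ t x) →
    otp (Ct t l n ∩ I) < Ordinal.lift.{u + 1} (κ.ord * Ordinal.omega0))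

lemma restrict_otp {κ : Cardinal.{u}} {δ : Ordinal.{u}} {t : Ordinal.{u} → ℕ}
    (ht : ∀ α < δ, InSkappa κ (α + 1) t)
    {β : Ordinal.{u}} (hβ : β < δ) (n : ℕ) (J : Set Ordinal.{u}) (hJ : J ⊆ Set.Iic β)
    (hJc : J.OrdConnected) (hv : ∀ x ∈ J, n ≤ t x) :
    otp {ξ | ξ ∈ J ∧ t ξ ≤ n} < Ordinal.lift.{u+1} (κ.ord * Ordinal.omega0) := by
  have h5 := (ht β hβ).2.2.2.2 n J (fun x hx => Set.mem_Iio.2 (ord_lt_add_one_iff.2 (hJ hx))) hJc hv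
  have heq : Ct t (β + 1) n ∩ J = {ξ | ξ ∈ J ∧ t ξ ≤ n} := by
    ext ξ
    constructor
    · rintro ⟨⟨_, h2⟩, h3⟩; exact ⟨h3, h2⟩
    · rintro ⟨h1, h2⟩; exact ⟨⟨ord_lt_add_one_iff.2 (hJ h1), h2⟩, h1⟩
  rwa [heq] at h5

set_option maxHeartbeats 1000000 in
/-- An `𝕊_κ`-limit `t` of limit length `δ` extends to an element of `𝕊_κ` of length
`δ + 1` iff its limit infimum is some finite `n` whose preimage has a tail of order type
less than `κ·ω`. In particular such an extension exists whenever `cf(δ) > ω`. -/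
theorem stmt13 (κ : Cardinal.{u}) (hκ : ℵ₀ ≤ κ) (δ : Ordinal.{u})
    (hδ : δ < (Order.succ κ).ord) (hlim : Order.IsSuccLimit δ) (t : Ordinal.{u} → ℕ)
    (ht : ∀ α < δ, InSkappa κ (α + 1) t) :
    ((∃ s : Ordinal.{u} → ℕ, (∀ ξ < δ, s ξ = t ξ) ∧ InSkappa κ (δ + 1) s) ↔
      ∃ n : ℕ,
        (UnbddBelow {ξ | ξ < δ ∧ t ξ = n} δ ∧
          ∀ m < n, ¬ UnbddBelow {ξ | ξ < δ ∧ t ξ = m} δ) ∧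
        ∃ α < δ, otp {ξ | α < ξ ∧ ξ < δ ∧ t ξ = n} <
          Ordinal.lift.{u + 1} (κ.ord * Ordinal.omega0)) ∧
    (ℵ₀ < δ.cof →
      ∃ s : Ordinal.{u} → ℕ, (∀ ξ < δ, s ξ = t ξ) ∧ InSkappa κ (δ + 1) s) := by
  classical
  have hδ0 : (0 : Ordinal.{u}) < δ := hlim.pos
  have hδδ : δ < δ + 1 := ord_lt_add_one_iff.2 le_rfl
  have main : (∃ s : Ordinal.{u} → ℕ, (∀ ξ < δ, s ξ = t ξ) ∧ InSkappa κ (δ + 1) s) ↔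
      ∃ n : ℕ,
        (UnbddBelow {ξ | ξ < δ ∧ t ξ = n} δ ∧
          ∀ m < n, ¬ UnbddBelow {ξ | ξ < δ ∧ t ξ = m} δ) ∧
        ∃ α < δ, otp {ξ | α < ξ ∧ ξ < δ ∧ t ξ = n} <
          Ordinal.lift.{u + 1} (κ.ord * Ordinal.omega0) := by
    constructor
    · rintro ⟨s, hst, hS⟩
      obtain ⟨-, -, -, h4, h5⟩ := hS
      obtain ⟨hU, hMin⟩ := h4 δ hδδ hlim
      set n := s δ with hn
      have hmin' : ∀ m < n, ¬ UnbddBelow {ξ | ξ < δ ∧ t ξ = m} δ := by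
        intro m hm hunb
        have : UnbddBelow (Ct s (δ + 1) m) δ :=
          unbdd_mono (fun ξ hξ hlt => ⟨hlt.trans hδδ, by rw [hst ξ hξ.1, hξ.2]⟩) hunb
        exact absurd (hMin m this) (not_le.2 hm)
      obtain ⟨β, hβδ, hβ⟩ := bound_small_values hδ0 n hmin'
      have htail_mem : ∀ ξ, β < ξ → ξ < δ → s ξ ≤ n → t ξ = n := by
        intro ξ h1 h2 h3'
        have h4' : t ξ ≤ n := by rw [← hst ξ h2]; exact h3'
        rcases lt_or_eq_of_le h4' with h' | h'
        · exact absurd (hβ ξ h2 h') (not_le.2 h1)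
        · exact h'
      refine ⟨n, ⟨?_, hmin'⟩, β, hβδ, ?_⟩
      · intro γ hγ
        obtain ⟨ξ, ⟨hξ1, hξ2⟩, h1, h2⟩ := hU (max γ β) (max_lt hγ hβδ)
        exact ⟨ξ, ⟨h2, htail_mem ξ (lt_of_le_of_lt (le_max_right _ _) h1) h2 hξ2⟩,
          lt_of_le_of_lt (le_max_left _ _) h1, h2⟩
      · have heq : Ct s (δ + 1) n ∩ Set.Ioo β δ = {ξ | β < ξ ∧ ξ < δ ∧ t ξ = n} := by
          ext ξ
          constructor
          · rintro ⟨⟨h1, h2⟩, h3, h4'⟩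
            exact ⟨h3, h4', htail_mem ξ h3 h4' h2⟩
          · rintro ⟨h1, h2, h3⟩
            exact ⟨⟨h2.trans hδδ, by rw [hst ξ h2, h3]⟩, h1, h2⟩
        have hres := h5 n (Set.Ioo β δ) (fun x hx => Set.mem_Iio.2 (hx.2.trans hδδ))
          Set.ordConnected_Ioo ?_
        · rwa [heq] at hres
        · intro x hx
          rw [hst x hx.2]
          by_contra hcon
          push_neg at hcon
          exact absurd (hβ x hx.2 hcon) (not_le.2 hx.1)
    · rintro ⟨n, ⟨hU, hMin⟩, α₀, hα₀δ, htail⟩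
      obtain ⟨β, hβδ, hβ⟩ := bound_small_values hδ0 n hMin
      set s : Ordinal.{u} → ℕ := fun ξ => if ξ < δ then t ξ else n with hs_def
      have hst : ∀ ξ < δ, s ξ = t ξ := fun ξ h => if_pos h
      have hsδ : s δ = n := if_neg (lt_irrefl δ)
      have transfer : ∀ x < δ, ∀ m : ℕ,
          UnbddBelow (Ct s (δ + 1) m) x → UnbddBelow (Ct t (x + 1) m) x := by
        intro x hxδ m
        exact unbdd_mono (fun ξ hξ hlt =>
          ⟨ord_lt_add_one_iff.2 hlt.le, by rw [← hst ξ (hlt.trans hxδ)]; exact hξ.2⟩)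
      have transfer' : ∀ x < δ, ∀ m : ℕ,
          UnbddBelow (Ct t (x + 1) m) x → UnbddBelow (Ct s (δ + 1) m) x := by
        intro x hxδ m
        exact unbdd_mono (fun ξ hξ hlt =>
          ⟨(hlt.trans hxδ).trans hδδ, by rw [hst ξ (hlt.trans hxδ)]; exact hξ.2⟩)
      have hminδ : ∀ m : ℕ, UnbddBelow (Ct s (δ + 1) m) δ → n ≤ m := by
        intro m hunb
        by_contra hcon
        push_neg at hcon
        obtain ⟨ξ, ⟨h1, h2⟩, h3, h4⟩ := hunb β hβδ
        have h5 : t ξ ≤ m := by rw [← hst ξ h4]; exact h2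
        exact absurd (hβ ξ h4 (lt_of_le_of_lt h5 hcon)) (not_le.2 h3)
      have hUδ : UnbddBelow (Ct s (δ + 1) n) δ :=
        unbdd_mono (fun ξ hξ hlt => ⟨hlt.trans hδδ, by rw [hst ξ hξ.1]; exact le_of_eq hξ.2⟩) hU
      refine ⟨s, hst, ⟨δ, rfl⟩, ?_, ?_, ?_, ?_⟩
      · rw [Ordinal.add_one_eq_succ]
        exact (Cardinal.isSuccLimit_ord (hκ.trans (Order.le_succ κ))).succ_lt hδ
      · intro m x hx hxlim hunb
        rcases (ord_lt_add_one_iff.1 hx).lt_or_eq with hxd | hxd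
        · rw [hst x hxd]
          exact (ht x hxd).2.2.1 m x (ord_lt_add_one_iff.2 le_rfl) hxlim (transfer x hxd m hunb)
        · subst hxd
          rw [hsδ]
          exact hminδ m hunb
      · intro x hx hxlim
        rcases (ord_lt_add_one_iff.1 hx).lt_or_eq with hxd | hxd
        · constructor
          · rw [hst x hxd]
            exact transfer' x hxd (t x)
              ((ht x hxd).2.2.2.1 x (ord_lt_add_one_iff.2 le_rfl) hxlim).1
          · intro m hm
            rw [hst x hxd]
            exact ((ht x hxd).2.2.2.1 x (ord_lt_add_one_iff.2 le_rfl) hxlim).2 m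
              (transfer x hxd m hm)
        · subst hxd
          constructor
          · rw [hsδ]; exact hUδ
          · intro m hm; rw [hsδ]; exact hminδ m hm
      · intro m I hIsub hIconn hIval
        rcases lt_trichotomy m n with hmn | rfl | hnm
        · have hXeq : Ct s (δ + 1) m ∩ I = {ξ | ξ ∈ I ∩ Set.Iic β ∧ t ξ ≤ m} := by
            ext ξ
            constructor
            · rintro ⟨⟨h1, h2⟩, h3⟩
              have hξδ : ξ < δ := by
                rcases (ord_lt_add_one_iff.1 h1).lt_or_eq with h | h
                · exact h
                · rw [h, hsδ] at h2; exact absurd h2 (not_le.2 hmn)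
              have htξ : t ξ ≤ m := by rw [← hst ξ hξδ]; exact h2
              exact ⟨⟨h3, Set.mem_Iic.2 (hβ ξ hξδ (lt_of_le_of_lt htξ hmn))⟩, htξ⟩
            · rintro ⟨⟨h1, h2⟩, h3⟩
              have hξδ : ξ < δ := lt_of_le_of_lt (Set.mem_Iic.1 h2) hβδ
              exact ⟨⟨hξδ.trans hδδ, by rw [hst ξ hξδ]; exact h3⟩, h1⟩
          rw [hXeq]
          refine restrict_otp ht hβδ m _ Set.inter_subset_right
            (hIconn.inter Set.ordConnected_Iic) ?_
          intro x hx
          have hv := hIval x hx.1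
          rwa [hst x (lt_of_le_of_lt (Set.mem_Iic.1 hx.2) hβδ)] at hv
        · refine lt_of_le_of_lt (otp_mono (show Ct s (δ + 1) m ∩ I ⊆
              ({ξ | ξ ∈ I ∩ Set.Iic α₀ ∧ t ξ ≤ m} ∪ {ξ | α₀ < ξ ∧ ξ < δ ∧ t ξ = m}) ∪ {δ}
              from ?_)) (lt_of_le_of_lt (otp_union_le ?_) (add_lt_L hκ
                (lt_of_le_of_lt (otp_union_le ?_) (add_lt_L hκ ?_ ?_))
                (lt_of_le_of_lt (otp_singleton_le δ) (one_lt_L hκ))))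
          · rintro ξ ⟨⟨h1, h2⟩, h3⟩
            rcases (ord_lt_add_one_iff.1 h1).lt_or_eq with h | h
            · left
              rcases le_or_gt ξ α₀ with h' | h'
              · exact Or.inl ⟨⟨h3, Set.mem_Iic.2 h'⟩, by rw [← hst ξ h]; exact h2⟩
              · refine Or.inr ⟨h', h, ?_⟩
                have h4' : t ξ ≤ m := by rw [← hst ξ h]; exact h2
                have h5' : m ≤ t ξ := by have := hIval ξ h3; rwa [hst ξ h] at this
                exact le_antisymm h4' h5'
            · right; rw [h]; exact Set.mem_singleton δ
          · rintro a (⟨⟨_, ha⟩, _⟩ | ⟨_, ha, _⟩) b hb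
            · rw [Set.mem_singleton_iff] at hb
              rw [hb]
              exact lt_of_le_of_lt (Set.mem_Iic.1 ha) hα₀δ
            · rw [Set.mem_singleton_iff] at hb
              rw [hb]
              exact ha
          · rintro a ⟨⟨_, ha⟩, _⟩ b ⟨hb, _, _⟩
            exact lt_of_le_of_lt (Set.mem_Iic.1 ha) hb
          · refine restrict_otp ht hα₀δ m _ Set.inter_subset_right
              (hIconn.inter Set.ordConnected_Iic) ?_
            intro x hx
            have hv := hIval x hx.1
            rwa [hst x (lt_of_le_of_lt (Set.mem_Iic.1 hx.2) hα₀δ)] at hv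
          · exact htail
        · by_cases hIu : UnbddBelow I δ
          · exfalso
            obtain ⟨x₁, hx₁I, -, hx₁δ⟩ := hIu 0 hδ0
            obtain ⟨ξ, ⟨hξδ, hξn⟩, h1, h2⟩ := hU x₁ hx₁δ
            obtain ⟨x₂, hx₂I, h3, -⟩ := hIu ξ h2
            have hmem : ξ ∈ I := hIconn.out hx₁I hx₂I ⟨h1.le, h3.le⟩
            have hv := hIval ξ hmem
            rw [hst ξ hξδ, hξn] at hv
            exact absurd hv (not_le.2 hnm)
          · obtain ⟨β', hβ'δ, hβ'⟩ := not_unbdd_bound hIu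
            have hIδ : ∀ ξ ∈ I, ξ < δ := by
              intro ξ hξ
              rcases (ord_lt_add_one_iff.1 (Set.mem_Iio.1 (hIsub hξ))).lt_or_eq with h | h
              · exact h
              · exfalso
                have hv := hIval ξ hξ
                rw [h, hsδ] at hv
                exact absurd hv (not_le.2 hnm)
            have hXeq : Ct s (δ + 1) m ∩ I = {ξ | ξ ∈ I ∩ Set.Iic β' ∧ t ξ ≤ m} := by
              ext ξ
              constructor
              · rintro ⟨⟨h1, h2⟩, h3⟩
                have hξδ := hIδ ξ h3
                exact ⟨⟨h3, Set.mem_Iic.2 (hβ' ξ h3 hξδ)⟩, by rw [← hst ξ hξδ]; exact h2⟩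
              · rintro ⟨⟨h1, h2⟩, h3⟩
                have hξδ := hIδ ξ h1
                exact ⟨⟨hξδ.trans hδδ, by rw [hst ξ hξδ]; exact h3⟩, h1⟩
            rw [hXeq]
            refine restrict_otp ht hβ'δ m _ Set.inter_subset_right
              (hIconn.inter Set.ordConnected_Iic) ?_
            intro x hx
            have hv := hIval x hx.1
            rwa [hst x (hIδ x hx.1)] at hv
  refine ⟨main, fun hcof => main.2 ?_⟩
  have hex : ∃ n : ℕ, UnbddBelow {ξ | ξ < δ ∧ t ξ = n} δ := by
    by_contra hcon
    push_neg at hcon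
    choose β hβδ hβ using fun n => not_unbdd_bound (hcon n)
    have hsup : iSup β < δ := Ordinal.iSup_lt_ord_lift (c := δ) (by rw [Cardinal.mk_nat, Cardinal.lift_aleph0]; exact hcof) hβδ
    have hξδ : iSup β + 1 < δ := by
      rw [Ordinal.add_one_eq_succ]; exact hlim.succ_lt hsup
    have h1 := hβ (t (iSup β + 1)) (iSup β + 1) ⟨hξδ, rfl⟩ hξδ
    have h2 : iSup β + 1 ≤ iSup β := h1.trans (Ordinal.le_iSup β _)
    exact absurd h2 (not_le.2 (ord_lt_add_one_iff.2 le_rfl))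
  set n := Nat.find hex with hn
  have hU : UnbddBelow {ξ | ξ < δ ∧ t ξ = n} δ := Nat.find_spec hex
  have hMin : ∀ m < n, ¬ UnbddBelow {ξ | ξ < δ ∧ t ξ = m} δ := fun m hm => Nat.find_min hex hm
  obtain ⟨β, hβδ, hβ⟩ := bound_small_values hδ0 n hMin
  refine ⟨n, ⟨hU, hMin⟩, β, hβδ, ?_⟩
  by_contra hcon
  push_neg at hcon
  set S := {ξ | β < ξ ∧ ξ < δ ∧ t ξ = n} with hS
  set rS := Subrel ((· < ·) : Ordinal.{u} → Ordinal.{u} → Prop) (· ∈ S) with hrS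
  have hcon' : Ordinal.lift.{u+1} (κ.ord * Ordinal.omega0) ≤ Ordinal.type rS := hcon
  have hκord : (0 : Ordinal.{u}) < κ.ord := by
    refine lt_of_lt_of_le Ordinal.omega0_pos ?_
    rw [← Cardinal.ord_aleph0]
    exact Cardinal.ord_le_ord.2 hκ
  have hidx : ∀ k : ℕ, Ordinal.lift.{u+1} (κ.ord * k) < Ordinal.type rS := fun k =>
    lt_of_lt_of_le (Ordinal.lift_lt.2
      ((mul_lt_mul_iff_right₀ hκord).2 (Ordinal.nat_lt_omega0 k))) hcon'
  have hlt' : ∀ i : Ordinal.{u}, i < κ.ord * Ordinal.omega0 →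
      Ordinal.lift.{u+1} i < Ordinal.type rS := fun i hi =>
    lt_of_lt_of_le (Ordinal.lift_lt.2 hi) hcon'
  set γk : ℕ → Ordinal.{u} := fun k => (Ordinal.enum rS ⟨_, hidx k⟩ : S).1 with hγk
  have hγkS : ∀ k, γk k ∈ S := fun k => (Ordinal.enum rS ⟨_, hidx k⟩).2
  have hγδ : iSup γk < δ :=
    Ordinal.iSup_lt_ord_lift (c := δ) (by rw [Cardinal.mk_nat, Cardinal.lift_aleph0]; exact hcof) (fun k => (hγkS k).2.1)
  have hvals : ∀ x ∈ Set.Ioc β (iSup γk), n ≤ t x := by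
    intro x hx
    by_contra h
    push_neg at h
    exact absurd (hβ x (lt_of_le_of_lt hx.2 hγδ) h) (not_le.2 hx.1)
  have hres := restrict_otp ht hγδ n (Set.Ioc β (iSup γk)) (fun x hx => hx.2)
    Set.ordConnected_Ioc hvals
  have hle : Ordinal.lift.{u+1} (κ.ord * Ordinal.omega0) ≤
      otp {ξ | ξ ∈ Set.Ioc β (iSup γk) ∧ t ξ ≤ n} := by
    refine lift_le_otp _ _ (fun i hi => (Ordinal.enum rS ⟨Ordinal.lift.{u+1} i, hlt' i hi⟩ : S).1)
      ?_ ?_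
    · intro i hi
      have hmemS : (Ordinal.enum rS ⟨Ordinal.lift.{u+1} i, hlt' i hi⟩ : S).1 ∈ S :=
        (Ordinal.enum rS ⟨Ordinal.lift.{u+1} i, hlt' i hi⟩).2
      obtain ⟨c, hc, hic⟩ := (Ordinal.lt_mul_iff_of_isSuccLimit Ordinal.isSuccLimit_omega0).1 hi
      obtain ⟨k, rfl⟩ := Ordinal.lt_omega0.1 hc
      have hmono : rS (Ordinal.enum rS ⟨Ordinal.lift.{u+1} i, hlt' i hi⟩)
          (Ordinal.enum rS ⟨_, hidx k⟩) :=
        Ordinal.enum_lt_enum.2 (Subtype.mk_lt_mk.2 (Ordinal.lift_lt.{u+1}.2 hic))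
      have hle' : (Ordinal.enum rS ⟨Ordinal.lift.{u+1} i, hlt' i hi⟩ : S).1 ≤ iSup γk :=
        le_of_lt (lt_of_lt_of_le hmono (Ordinal.le_iSup γk k))
      exact ⟨⟨hmemS.1, hle'⟩, le_of_eq hmemS.2.2⟩
    · intro i j hi hj hij
      have := (Ordinal.enum_lt_enum (r := rS) (o₁ := ⟨Ordinal.lift.{u+1} i, hlt' i hi⟩)
        (o₂ := ⟨Ordinal.lift.{u+1} j, hlt' j hj⟩)).2
        (Subtype.mk_lt_mk.2 (Ordinal.lift_lt.{u+1}.2 hij))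
      exact this
  exact absurd hres (not_lt.2 hle)
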